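/- Let G be a finite group acting doubly transitively on a finite set X = {1,...,k}, and let F be a field of characteristic p > 0. If p does not divide k and p does not divide the order of the two-point stabilizer G_{1,2}, then the FG-submodule W = {x ∈ F^k : x_1 + ... + x_k = 0} of the permutation module F^k is irreducible. -/

import Mathlib

/-- Lemma 3.1: If a finite group `G` acts doubly transitively on `X = {1,…,k}`,
`F` has characteristic `p > 0`, `p ∤ k` and `p ∤ |G_{1,2}|`, then the sum-zero
submodule `W` of the permutation module `F^k` is irreducible (it is nonzero and
its only `G`-invariant subspaces are `⊥` and `W`). -/
theorem stmt0 {G : Type*} [Group G] [Finite G] {k : ℕ} (hk : 2 ≤ k)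
    [MulAction G (Fin k)]
    (h2t : ∀ a b c d : Fin k, a ≠ b → c ≠ d → ∃ g : G, g • a = c ∧ g • b = d)
    (F : Type*) [Field F] (p : ℕ) (hp : 0 < p) [CharP F p]
    (hpk : ¬ p ∣ k)
    (hstab : ¬ p ∣ Nat.card {g : G // g • (⟨0, by omega⟩ : Fin k) = ⟨0, by omega⟩ ∧
      g • (⟨1, by omega⟩ : Fin k) = ⟨1, by omega⟩})
    (W : Submodule F (Fin k → F))
    (hW : ∀ x : Fin k → F, x ∈ W ↔ ∑ i, x i = 0) :
    W ≠ ⊥ ∧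
      ∀ U : Submodule F (Fin k → F), U ≤ W →
        (∀ g : G, ∀ x ∈ U, (fun i => x (g⁻¹ • i)) ∈ U) →
        U = ⊥ ∨ U = W := by
  classical
  have _inst : Fintype G := Fintype.ofFinite G
  have hi0 : (0 : ℕ) < k := by omega
  have hi1 : (1 : ℕ) < k := by omega
  set i0 : Fin k := ⟨0, hi0⟩ with hi0def
  set i1 : Fin k := ⟨1, hi1⟩ with hi1def
  have hi01 : i0 ≠ i1 := by simp [i0, i1, Fin.ext_iff]
  set m : ℕ := Nat.card {g : G // g • i0 = i0 ∧ g • i1 = i1} with hmdef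
  have hpm : ¬ p ∣ m := hstab
  have hmF : (m : F) ≠ 0 := fun h => hpm ((CharP.cast_eq_zero_iff F p m).mp h)
  have hkF : (k : F) ≠ 0 := fun h => hpk ((CharP.cast_eq_zero_iff F p k).mp h)
  -- a point different from any given point
  have hother : ∀ b : Fin k, (if b = i0 then i1 else i0) ≠ b := by
    intro b
    by_cases h : b = i0
    · rw [if_pos h, h]; exact fun hc => hi01 hc.symm
    · rw [if_neg h]; exact fun hc => h hc.symm
  -- counting lemma
  have hcount : ∀ (a i j : Fin k), i ≠ a → j ≠ a →
      Nat.card {h : G // h • a = a ∧ h • j = i} = m := by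
    intro a i j hi hj
    obtain ⟨σ, hσ1, hσ2⟩ := h2t i0 i1 a j hi01 (fun h => hj h.symm)
    obtain ⟨τ, hτ1, hτ2⟩ := h2t i0 i1 a i hi01 (fun h => hi h.symm)
    refine Nat.card_congr ⟨fun h => ⟨τ⁻¹ * h.1 * σ, ?_, ?_⟩,
      fun g => ⟨τ * g.1 * σ⁻¹, ?_, ?_⟩, ?_, ?_⟩
    · rw [mul_smul, mul_smul, hσ1, h.2.1, inv_smul_eq_iff, hτ1]
    · rw [mul_smul, mul_smul, hσ2, h.2.2, inv_smul_eq_iff, hτ2]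
    · rw [mul_smul, mul_smul, ← hσ1, inv_smul_smul, g.2.1, hτ1]; exact hσ1.symm
    · rw [mul_smul, mul_smul, ← hσ2, inv_smul_smul, g.2.2, hτ2]
    · intro h; ext; simp [mul_assoc]
    · intro g; ext; simp [mul_assoc]
  -- Finset version of the counting lemma
  have hfiber : ∀ (a i j : Fin k), i ≠ a →
      (Finset.univ.filter (fun h : G => h • a = a ∧ h⁻¹ • i = j)).card
        = if j = a then 0 else m := by
    intro a i j hi
    by_cases hj : j = a
    · subst hj
      rw [if_pos rfl, Finset.card_eq_zero, Finset.filter_eq_empty_iff]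
      rintro h - ⟨h1, h2⟩
      rw [inv_smul_eq_iff, h1] at h2
      exact hi h2
    · have hfe : (Finset.univ.filter (fun h : G => h • a = a ∧ h⁻¹ • i = j))
          = (Finset.univ.filter (fun h : G => h • a = a ∧ h • j = i)) := by
        ext h
        simp only [Finset.mem_filter, Finset.mem_univ, true_and, inv_smul_eq_iff]
        exact and_congr_right fun _ => eq_comm
      rw [if_neg hj, hfe, ← hcount a i j hi hj, Nat.card_eq_fintype_card,
        Fintype.card_subtype]
  constructor
  · -- W ≠ ⊥
    intro hbot
    have hv : (fun i => (if i = i0 then (1:F) else 0) - (if i = i1 then 1 else 0)) ∈ W := by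
      rw [hW, Finset.sum_sub_distrib]
      simp [Finset.sum_ite_eq']
    rw [hbot, Submodule.mem_bot] at hv
    have h0 := congrFun hv i0
    simp only [if_pos rfl, if_neg hi01, Pi.zero_apply, sub_zero] at h0
    exact one_ne_zero h0
  · intro U hUW hUinv
    by_cases hUbot : U = ⊥
    · exact Or.inl hUbot
    right
    obtain ⟨x, hxU, hxne⟩ := (Submodule.ne_bot_iff U).mp hUbot
    obtain ⟨a, ha⟩ : ∃ a, x a ≠ 0 := by
      by_contra hall
      push_neg at hall
      exact hxne (funext hall)
    have hxW : ∑ i, x i = 0 := (hW x).mp (hUW hxU)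
    set A : Finset G := Finset.univ.filter (fun h : G => h • a = a) with hA
    set y : Fin k → F := ∑ h ∈ A, (fun i => x (h⁻¹ • i)) with hy
    have hyU : y ∈ U := Submodule.sum_mem U (fun h _ => hUinv h x hxU)
    have hyi : ∀ i, y i = ∑ h ∈ A, x (h⁻¹ • i) := by
      intro i; rw [hy, Finset.sum_apply]
    have hyne : ∀ i, i ≠ a → y i = -((m : F) * x a) := by
      intro i hi
      rw [hyi i, ← Finset.sum_fiberwise_of_maps_to (g := fun h : G => h⁻¹ • i)
        (t := Finset.univ) (fun h _ => Finset.mem_univ _)]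
      have h1 : ∀ j : Fin k, ∑ h ∈ A.filter (fun h => h⁻¹ • i = j), x (h⁻¹ • i)
          = (if j = a then 0 else (m:F)) * x j := by
        intro j
        rw [Finset.sum_congr rfl (fun h hh => by rw [(Finset.mem_filter.mp hh).2]),
          Finset.sum_const, hA, Finset.filter_filter, hfiber a i j hi]
        by_cases hj : j = a <;> simp [hj]
      rw [Finset.sum_congr rfl (fun j _ => h1 j)]
      have h2 : ∀ j : Fin k, (if j = a then (0:F) else m) * x j
          = (m:F) * x j - (if j = a then (m:F) * x j else 0) := by
        intro j; by_cases hj : j = a <;> simp [hj]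
      rw [Finset.sum_congr rfl (fun j _ => h2 j), Finset.sum_sub_distrib,
        ← Finset.mul_sum, hxW, Finset.sum_ite_eq' Finset.univ a,
        if_pos (Finset.mem_univ a)]
      ring
    have hAcard : A.card = (k - 1) * m := by
      have hi' : (if a = i0 then i1 else i0) ≠ a := hother a
      rw [Finset.card_eq_sum_card_fiberwise
        (f := fun h : G => h⁻¹ • (if a = i0 then i1 else i0)) (t := Finset.univ)
        (fun h _ => Finset.mem_univ _)]
      have h1 : ∀ j : Fin k,
          (A.filter (fun h => h⁻¹ • (if a = i0 then i1 else i0) = j)).card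
            = if j = a then 0 else m := by
        intro j
        rw [hA, Finset.filter_filter]
        exact hfiber a _ j hi'
      rw [Finset.sum_congr rfl (fun j _ => h1 j), Finset.sum_ite, Finset.sum_const,
        Finset.sum_const, Finset.filter_ne', Finset.card_erase_of_mem (Finset.mem_univ a)]
      simp [mul_comm]
    have hya : y a = (((k - 1) * m : ℕ) : F) * x a := by
      rw [hyi a]
      have h1 : ∀ h ∈ A, x (h⁻¹ • a) = x a := by
        intro h hh
        have : h⁻¹ • a = a := by
          rw [inv_smul_eq_iff]
          exact ((Finset.mem_filter.mp hh).2).symm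
        rw [this]
      rw [Finset.sum_congr rfl h1, Finset.sum_const, hAcard, nsmul_eq_mul]
    set u : Fin k → F := fun i => if i = a then (k : F) - 1 else -1 with hu
    have hyu : y = ((m : F) * x a) • u := by
      funext i
      by_cases hia : i = a
      · subst hia
        rw [hya]
        simp only [hu, if_pos rfl, Pi.smul_apply, smul_eq_mul]
        push_cast [Nat.cast_sub (by omega : 1 ≤ k)]
        ring
      · rw [hyne i hia]
        simp only [hu, if_neg hia, Pi.smul_apply, smul_eq_mul]
        ring
    have huU : u ∈ U := by
      have h3 := Submodule.smul_mem U ((m : F) * x a)⁻¹ hyU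
      rwa [hyu, smul_smul, inv_mul_cancel₀ (mul_ne_zero hmF ha), one_smul] at h3
    have hubU : ∀ b : Fin k, (fun i => if i = b then (k : F) - 1 else -1) ∈ U := by
      intro b
      obtain ⟨g, hg1, hg2⟩ := h2t a (if a = i0 then i1 else i0) b (if b = i0 then i1 else i0)
        (Ne.symm (hother a)) (Ne.symm (hother b))
      have h4 : (fun i => u (g⁻¹ • i)) = (fun i => if i = b then (k:F) - 1 else -1) := by
        funext i
        by_cases hib : i = b
        · rw [hu]
          simp only
          rw [if_pos (by rw [hib, ← hg1, inv_smul_smul]), if_pos hib]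
        · rw [hu]
          simp only
          rw [if_neg (fun hc => hib (by rw [inv_smul_eq_iff] at hc; rw [hc, hg1])),
            if_neg hib]
      rw [← h4]
      exact hUinv g u huU
    have hdU : ∀ b : Fin k,
        (fun i : Fin k => (if i = b then (1:F) else 0) - (if i = a then 1 else 0)) ∈ U := by
      intro b
      by_cases hba : b = a
      · subst hba
        have : (fun i : Fin k => (if i = b then (1:F) else 0) - (if i = b then 1 else 0))
            = 0 := by funext i; simp
        rw [this]
        exact Submodule.zero_mem U
      · have h5 := Submodule.smul_mem U (k : F)⁻¹
          (Submodule.sub_mem U (hubU b) (hubU a))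
        have h6 : (fun i : Fin k => (if i = b then (1:F) else 0) - (if i = a then 1 else 0))
            = (k : F)⁻¹ • ((fun i => if i = b then (k : F) - 1 else -1)
              - (fun i => if i = a then (k : F) - 1 else -1)) := by
          funext i
          simp only [Pi.smul_apply, Pi.sub_apply, smul_eq_mul]
          by_cases hib : i = b
          · rw [if_pos hib, if_neg (hib ▸ hba), if_pos hib, if_neg (hib ▸ hba)]
            field_simp
            ring
          · by_cases hia : i = a
            · rw [if_neg hib, if_pos hia, if_neg hib, if_pos hia]
              field_simp
              ring
            · rw [if_neg hib, if_neg hia, if_neg hib, if_neg hia]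
              simp
        rw [h6]
        exact h5
    apply le_antisymm hUW
    intro z hz
    have hzs : ∑ i, z i = 0 := (hW z).mp hz
    have hzd : z = ∑ b : Fin k, z b •
        (fun i : Fin k => (if i = b then (1:F) else 0) - (if i = a then 1 else 0)) := by
      funext i
      rw [Finset.sum_apply]
      have h7 : ∀ b : Fin k, (z b • (fun i : Fin k =>
          (if i = b then (1:F) else 0) - (if i = a then 1 else 0))) i
          = z b * (if i = b then (1:F) else 0) - z b * (if i = a then 1 else 0) := by
        intro b; simp [mul_sub]
      rw [Finset.sum_congr rfl (fun b _ => h7 b), Finset.sum_sub_distrib,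
        ← Finset.sum_mul, hzs, zero_mul, sub_zero]
      simp [mul_ite, Finset.sum_ite_eq]
    rw [hzd]
    exact Submodule.sum_mem U (fun b _ => Submodule.smul_mem U _ (hdU b))
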